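/- arXiv:1912.09146 — 3 statements merged into one kernel-verified Lean document; each statement's English description precedes it below -/
import Mathlib

section
/- Under the alternative H_1: T q ≠ 0, the Wald-type statistic S_n(T) = n (T q̂)ᵀ G_n (T q̂) converges in probability to ∞, i.e., for every C > 0 the probability P(S_n(T) ≤ C) tends to 0 as min_i n_i → ∞, where for each n and each sample point, G_n is a Moore–Penrose inverse of T Σ̂_n Tᵀ and Σ̂_n is any sequence of random km×km matrices converging in probability to Σ = diag(Σ^(1),…,Σ^(k)). -/
open MeasureTheory ProbabilityTheory Filter Topology Matrix

noncomputable section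

/-- Generalized inverse (quantile functional) `F⁻¹(p) = inf {t | F t ≥ p}`. -/
def qf (F : ℝ → ℝ) (p : ℝ) : ℝ := sInf {t : ℝ | p ≤ F t}

/-- Empirical CDF of the first `nn` entries of a sequence of reals. -/
def ecdf (nn : ℕ) (x : ℕ → ℝ) (t : ℝ) : ℝ :=
  (∑ j ∈ Finset.range nn, if x j ≤ t then (1 : ℝ) else 0) / nn

/-- Sample `p`-quantile of the first `nn` entries of a sequence of reals. -/
def sampleQuantile (nn : ℕ) (x : ℕ → ℝ) (p : ℝ) : ℝ := qf (ecdf nn x) p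

/-- `G` is the Moore–Penrose inverse of `A`. -/
def IsMoorePenrose {n : Type*} [Fintype n] [DecidableEq n] (A G : Matrix n n ℝ) : Prop :=
  A * G * A = A ∧ G * A * G = G ∧ (A * G)ᵀ = A * G ∧ (G * A)ᵀ = G * A

/-- The chi-square distribution with `d` degrees of freedom, i.e. the Gamma distribution with
shape `d/2` and rate `1/2`. -/
def chiSquareMeasure (d : ℕ) : Measure ℝ := gammaMeasure (d / 2 : ℝ) (1 / 2 : ℝ)

/-- Convergence in distribution of random elements `V ν` (under `P`) to the law `μ`. -/
def TendstoInDistribution {Ω : Type*} [MeasurableSpace Ω] (P : Measure Ω)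
    {E : Type*} [TopologicalSpace E] [MeasurableSpace E] (V : ℕ → Ω → E) (μ : Measure E) : Prop :=
  ∀ f : BoundedContinuousFunction E ℝ,
    Tendsto (fun ν => ∫ ω, f (V ν ω) ∂P) atTop (𝓝 (∫ x, f x ∂μ))

namespace Stmt3Aux

open Finset Filter Topology MeasureTheory ProbabilityTheory Matrix

variable {m : ℕ}

/-- Quadratic form of the Brownian-bridge covariance matrix. -/
lemma bb_quadform (p : Fin m → ℝ) (hp0 : ∀ r, 0 < p r)
    (hp1 : ∀ r, p r < 1) (hpmono : StrictMono p) (x : Fin m → ℝ) :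
    0 ≤ ∑ a, ∑ b, x a * x b * (min (p a) (p b) - p a * p b) ∧
    (x ≠ 0 → 0 < ∑ a, ∑ b, x a * x b * (min (p a) (p b) - p a * p b)) := by
  rcases Nat.eq_zero_or_pos m with hm | hm
  · subst hm
    exact ⟨by simp, fun hx => absurd (funext fun a => a.elim0) hx⟩
  set ff : ℕ → ℝ := fun j => if h : 0 < j ∧ j ≤ m then p ⟨j - 1, by omega⟩ else 0 with hff
  set D : ℕ → ℝ := fun j => ff (j + 1) - ff j with hD
  set T : ℕ → ℝ := fun j => ∑ a : Fin m, if j ≤ (a : ℕ) then x a else 0 with hT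
  have hffval : ∀ a : Fin m, ff ((a : ℕ) + 1) = p a := by
    intro a
    have h1 : 0 < (a : ℕ) + 1 ∧ (a : ℕ) + 1 ≤ m := ⟨Nat.succ_pos _, a.2⟩
    simp only [hff, dif_pos h1]
    exact congrArg p (Fin.ext (by simp))
  have hff0 : ff 0 = 0 := by simp [hff]
  have hDpos : ∀ j ∈ range m, 0 < D j := by
    intro j hj
    rw [mem_range] at hj
    rcases Nat.eq_zero_or_pos j with h0 | h0
    · subst h0
      have h1 : (0:ℕ) < 1 ∧ 1 ≤ m := ⟨one_pos, hm⟩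
      simp only [hD, zero_add, hff, dif_pos h1, hff0]
      simpa using hp0 _
    · have h1 : 0 < j + 1 ∧ j + 1 ≤ m := ⟨Nat.succ_pos _, hj⟩
      have h2 : 0 < j ∧ j ≤ m := ⟨h0, by omega⟩
      simp only [hD, hff, dif_pos h1, dif_pos h2, sub_pos]
      exact hpmono (by simp [Fin.lt_def]; omega)
  have hDsum : ∀ t, ∑ j ∈ range t, D j = ff t := by
    intro t
    rw [hD, Finset.sum_range_sub ff t, hff0, sub_zero]
  have key1 : ∀ a : Fin m, ∑ j ∈ range m, (if j ≤ (a : ℕ) then D j else 0) = p a := by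
    intro a
    have hsub : range ((a : ℕ) + 1) ⊆ range m := by
      intro j hj; rw [mem_range] at *; omega
    rw [← Finset.sum_subset hsub]
    · rw [Finset.sum_congr rfl fun j hj => if_pos (by rw [mem_range] at hj; omega)]
      rw [hDsum, hffval]
    · intro j _ hj
      rw [mem_range] at hj
      exact if_neg (by omega)
  have key2 : ∀ a b : Fin m,
      ∑ j ∈ range m, (if j ≤ (a : ℕ) ∧ j ≤ (b : ℕ) then D j else 0)
        = min (p a) (p b) := by
    intro a b
    rcases le_total (a : ℕ) (b : ℕ) with hab | hab
    · rw [min_eq_left (hpmono.le_iff_le.2 hab), ← key1 a]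
      refine Finset.sum_congr rfl fun j _ => ?_
      by_cases h : j ≤ (a : ℕ)
      · rw [if_pos ⟨h, le_trans h hab⟩, if_pos h]
      · rw [if_neg (fun hc => h hc.1), if_neg h]
    · rw [min_eq_right (hpmono.le_iff_le.2 hab), ← key1 b]
      refine Finset.sum_congr rfl fun j _ => ?_
      by_cases h : j ≤ (b : ℕ)
      · rw [if_pos ⟨le_trans h hab, h⟩, if_pos h]
      · rw [if_neg (fun hc => h hc.2), if_neg h]
  -- main identity
  have main : ∑ a, ∑ b, x a * x b * (min (p a) (p b) - p a * p b)
      = (∑ j ∈ range m, D j * T j ^ 2) - (∑ j ∈ range m, D j * T j) ^ 2 := by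
    have e1 : ∑ a : Fin m, ∑ b : Fin m, x a * x b * min (p a) (p b)
        = ∑ j ∈ range m, D j * T j ^ 2 := by
      have h1 : ∀ a b : Fin m, x a * x b * min (p a) (p b)
          = ∑ j ∈ range m, (if j ≤ (a : ℕ) then x a else 0)
              * (if j ≤ (b : ℕ) then x b else 0) * D j := by
        intro a b
        rw [← key2 a b, Finset.mul_sum]
        refine Finset.sum_congr rfl fun j _ => ?_
        by_cases h1 : j ≤ (a : ℕ) <;> by_cases h2 : j ≤ (b : ℕ) <;>
          simp [h1, h2]
      simp_rw [h1]
      have h2 : ∀ a : Fin m, ∑ b : Fin m, ∑ j ∈ range m,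
          (if j ≤ (a : ℕ) then x a else 0) * (if j ≤ (b : ℕ) then x b else 0) * D j
          = ∑ j ∈ range m, ∑ b : Fin m,
          (if j ≤ (a : ℕ) then x a else 0) * (if j ≤ (b : ℕ) then x b else 0) * D j :=
        fun a => Finset.sum_comm
      simp_rw [h2]
      rw [Finset.sum_comm]
      refine Finset.sum_congr rfl fun j _ => ?_
      rw [sq, hT, Finset.sum_mul_sum, Finset.mul_sum]
      refine Finset.sum_congr rfl fun a _ => ?_
      rw [Finset.mul_sum]
      refine Finset.sum_congr rfl fun b _ => ?_
      ring
    have hxp : ∑ a : Fin m, x a * p a = ∑ j ∈ range m, D j * T j := by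
      have h1 : ∀ a : Fin m, x a * p a
          = ∑ j ∈ range m, (if j ≤ (a : ℕ) then x a else 0) * D j := by
        intro a
        rw [← key1 a, Finset.mul_sum]
        refine Finset.sum_congr rfl fun j _ => ?_
        by_cases h : j ≤ (a : ℕ) <;> simp [h]
      simp_rw [h1]
      rw [Finset.sum_comm]
      refine Finset.sum_congr rfl fun j _ => ?_
      simp only [hT, Finset.mul_sum]
      exact Finset.sum_congr rfl fun a _ => mul_comm _ _
    have e2 : ∑ a : Fin m, ∑ b : Fin m, x a * x b * (p a * p b)
        = (∑ j ∈ range m, D j * T j) ^ 2 := by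
      rw [← hxp, sq, Finset.sum_mul_sum]
      refine Finset.sum_congr rfl fun a _ => Finset.sum_congr rfl fun b _ => by ring
    calc ∑ a, ∑ b, x a * x b * (min (p a) (p b) - p a * p b)
        = (∑ a : Fin m, ∑ b : Fin m, x a * x b * min (p a) (p b))
          - ∑ a : Fin m, ∑ b : Fin m, x a * x b * (p a * p b) := by
          simp_rw [mul_sub, Finset.sum_sub_distrib]
      _ = (∑ j ∈ range m, D j * T j ^ 2) - (∑ j ∈ range m, D j * T j) ^ 2 := by
          rw [e1, e2]
  -- bounds
  have hDtot : ∑ j ∈ range m, D j < 1 := by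
    rw [hDsum]
    have h1 : 0 < m ∧ m ≤ m := ⟨hm, le_rfl⟩
    simp only [hff, dif_pos h1]
    exact hp1 _
  have hDtot0 : 0 ≤ ∑ j ∈ range m, D j :=
    Finset.sum_nonneg fun j hj => (hDpos j hj).le
  have hCS : (∑ j ∈ range m, D j * T j) ^ 2
      ≤ (∑ j ∈ range m, D j) * ∑ j ∈ range m, D j * T j ^ 2 := by
    have := Finset.sum_mul_sq_le_sq_mul_sq (range m)
      (fun j => Real.sqrt (D j)) (fun j => Real.sqrt (D j) * T j)
    have hl : ∑ j ∈ range m, Real.sqrt (D j) * (Real.sqrt (D j) * T j)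
        = ∑ j ∈ range m, D j * T j :=
      Finset.sum_congr rfl fun j hj => by
        rw [← mul_assoc, Real.mul_self_sqrt (hDpos j hj).le]
    have hr1 : ∑ j ∈ range m, Real.sqrt (D j) ^ 2 = ∑ j ∈ range m, D j :=
      Finset.sum_congr rfl fun j hj => Real.sq_sqrt (hDpos j hj).le
    have hr2 : ∑ j ∈ range m, (Real.sqrt (D j) * T j) ^ 2
        = ∑ j ∈ range m, D j * T j ^ 2 :=
      Finset.sum_congr rfl fun j hj => by
        rw [mul_pow, Real.sq_sqrt (hDpos j hj).le]
    rw [hl, hr1, hr2] at this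
    exact this
  have hQ0 : 0 ≤ ∑ j ∈ range m, D j * T j ^ 2 :=
    Finset.sum_nonneg fun j hj => mul_nonneg (hDpos j hj).le (sq_nonneg _)
  have hlow : (1 - ∑ j ∈ range m, D j) * (∑ j ∈ range m, D j * T j ^ 2)
      ≤ (∑ j ∈ range m, D j * T j ^ 2) - (∑ j ∈ range m, D j * T j) ^ 2 := by
    nlinarith [hCS]
  constructor
  · rw [main]
    refine le_trans ?_ hlow
    exact mul_nonneg (by linarith) hQ0
  · intro hx
    rw [main]
    refine lt_of_lt_of_le ?_ hlow
    refine mul_pos (by linarith) ?_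
    rcases lt_or_eq_of_le hQ0 with h | h
    · exact h
    exfalso
    have hTzero : ∀ j ∈ range m, T j = 0 := by
      intro j hj
      have h0 := (Finset.sum_eq_zero_iff_of_nonneg
        (fun j hj => mul_nonneg (hDpos j hj).le (sq_nonneg _))).1 h.symm j hj
      have hD' := (hDpos j hj).ne'
      have hsq : T j ^ 2 = 0 := by
        rcases mul_eq_zero.1 h0 with h' | h'
        · exact absurd h' hD'
        · exact h'
      exact pow_eq_zero_iff two_ne_zero |>.1 hsq
    have hTzero' : ∀ j, T j = 0 := by
      intro j
      by_cases hj : j < m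
      · exact hTzero j (mem_range.2 hj)
      · simp only [hT]
        exact Finset.sum_eq_zero fun c _ => if_neg (by have := c.2; omega)
    apply hx
    funext a
    have hsplit : x a = T (a : ℕ) - T ((a : ℕ) + 1) := by
      simp only [hT, ← Finset.sum_sub_distrib]
      have hterm : ∀ c : Fin m,
          (if (a:ℕ) ≤ (c:ℕ) then x c else 0) - (if (a:ℕ)+1 ≤ (c:ℕ) then x c else 0)
          = if c = a then x c else 0 := by
        intro c
        by_cases h1 : (a:ℕ) ≤ (c:ℕ)
        · by_cases h2 : (a:ℕ)+1 ≤ (c:ℕ)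
          · rw [if_pos h1, if_pos h2, if_neg (fun hc => by subst hc; omega), sub_self]
          · have hca : c = a := Fin.ext (by omega)
            rw [if_pos h1, if_neg h2, if_pos hca, sub_zero]
        · rw [if_neg h1, if_neg (by omega),
            if_neg (fun hc => by subst hc; exact h1 le_rfl), sub_zero]
      rw [Finset.sum_congr rfl fun c _ => hterm c]
      simp [Finset.sum_ite_eq']
    rw [hsplit, hTzero' _, hTzero' _, sub_zero]
    rfl

lemma S_quadform {k m : ℕ} (p : Fin m → ℝ) (hp0 : ∀ r, 0 < p r)
    (hp1 : ∀ r, p r < 1) (hpmono : StrictMono p)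
    (κ : Fin k → ℝ) (hκ : ∀ i, 0 < κ i)
    (g : Fin k → Fin m → ℝ) (hg : ∀ i r, 0 < g i r)
    (S : Matrix (Fin k × Fin m) (Fin k × Fin m) ℝ)
    (hS : ∀ x y : Fin k × Fin m, S x y =
      if x.1 = y.1 then
        (min (p x.2) (p y.2) - p x.2 * p y.2) / (κ x.1 * g x.1 x.2 * g x.1 y.2)
      else 0)
    (x : Fin k × Fin m → ℝ) (hx : x ≠ 0) : 0 < x ⬝ᵥ S.mulVec x := by
  have expand : x ⬝ᵥ S.mulVec x
      = ∑ i : Fin k, (κ i)⁻¹ * ∑ a : Fin m, ∑ b : Fin m,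
          (x (i,a) / g i a) * (x (i,b) / g i b) * (min (p a) (p b) - p a * p b) := by
    simp only [dotProduct, Matrix.mulVec, dotProduct]
    rw [Fintype.sum_prod_type]
    refine Finset.sum_congr rfl fun i _ => ?_
    have inner : ∀ a : Fin m,
        (∑ w : Fin k × Fin m, S (i,a) w * x w)
        = ∑ b : Fin m, (min (p a) (p b) - p a * p b) / (κ i * g i a * g i b) * x (i,b) := by
      intro a
      rw [Fintype.sum_prod_type]
      have h1 : ∀ i' : Fin k, ∑ b : Fin m, S (i,a) (i',b) * x (i',b)
          = if i = i' then
              ∑ b : Fin m, (min (p a) (p b) - p a * p b) / (κ i * g i a * g i b) * x (i',b)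
            else 0 := by
        intro i'
        by_cases h : i = i'
        · rw [if_pos h]
          refine Finset.sum_congr rfl fun b _ => ?_
          rw [hS]
          simp only [if_pos h]
        · rw [if_neg h]
          refine Finset.sum_eq_zero fun b _ => ?_
          rw [hS]
          simp only [if_neg h, zero_mul]
      rw [Finset.sum_congr rfl fun i' _ => h1 i', Finset.sum_ite_eq]
      simp
    simp only [inner]
    rw [Finset.mul_sum]
    refine Finset.sum_congr rfl fun a _ => ?_
    rw [Finset.mul_sum, Finset.mul_sum]
    refine Finset.sum_congr rfl fun b _ => ?_
    have h1 := (hκ i).ne'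
    have h2 := (hg i a).ne'
    have h3 := (hg i b).ne'
    field_simp
  rw [expand]
  obtain ⟨⟨i0, a0⟩, hxa⟩ : ∃ z, x z ≠ 0 := by
    by_contra hc
    push_neg at hc
    exact hx (funext hc)
  refine Finset.sum_pos' (fun i _ => ?_) ⟨i0, Finset.mem_univ _, ?_⟩
  · exact mul_nonneg (inv_nonneg.2 (hκ i).le)
      ((bb_quadform p hp0 hp1 hpmono _).1)
  · refine mul_pos (inv_pos.2 (hκ i0)) ?_
    refine (bb_quadform p hp0 hp1 hpmono _).2 ?_
    intro hy
    exact hxa (by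
      have := congrFun hy a0
      simp only [Pi.zero_apply] at this
      rw [div_eq_zero_iff] at this
      rcases this with h' | h'
      · exact h'
      · exact absurd h' (hg i0 a0).ne')

variable {ι : Type*} [Fintype ι] [DecidableEq ι]

/-- auxiliary matrix `B = T Shᵀ T + (1 - T)`. -/
def Bmat (T Sh : Matrix ι ι ℝ) : Matrix ι ι ℝ := T * Shᵀ * T + (1 - T)

/-- numerator of the quadratic form. -/
def numf (T Sh : Matrix ι ι ℝ) (qv : ι → ℝ) : ℝ :=
  (T.mulVec ((Bmat T Sh).adjugate.mulVec (T.mulVec qv))) ⬝ᵥ (T.mulVec qv)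

lemma TB_eq (T M : Matrix ι ι ℝ) (hTidem : T * T = T) :
    T * (T * M * T + (1 - T)) = T * M * T := by
  rw [mul_add, mul_sub, mul_one, ← mul_assoc, ← mul_assoc, hTidem, sub_self, add_zero]

lemma range_step (T M : Matrix ι ι ℝ) (hTidem : T * T = T)
    (hdet : IsUnit (T * M * T + (1 - T)).det) :
    (T * M * T) * (T * (T * M * T + (1 - T))⁻¹) = T := by
  have h1 : (T * M * T) * T = T * M * T := by
    rw [mul_assoc (T * M) T T, hTidem]
  rw [← mul_assoc, h1]
  calc (T * M * T) * (T * M * T + (1 - T))⁻¹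
      = (T * (T * M * T + (1 - T))) * (T * M * T + (1 - T))⁻¹ := by rw [TB_eq T M hTidem]
    _ = T := by rw [mul_assoc, Matrix.mul_nonsing_inv _ hdet, mul_one]

lemma quad_eq (T Sh G : Matrix ι ι ℝ) (hTsymm : Tᵀ = T) (hTidem : T * T = T)
    (hdet1 : IsUnit (Bmat T Sh).det) (hdet2 : IsUnit (Bmat T Shᵀ).det)
    (hG : (T * Sh * Tᵀ) * G * (T * Sh * Tᵀ) = T * Sh * Tᵀ) (u : ι → ℝ) :
    (T.mulVec u) ⬝ᵥ G.mulVec (T.mulVec u) = numf T Sh u / (Bmat T Sh).det := by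
  rw [hTsymm] at hG
  have hBT : Bmat T Shᵀ = T * Sh * T + (1 - T) := by rw [Bmat, transpose_transpose]
  have hB1 : Bmat T Sh = T * Shᵀ * T + (1 - T) := rfl
  have hdet1' : IsUnit (T * Shᵀ * T + (1 - T)).det := hB1 ▸ hdet1
  have hdet2' : IsUnit (T * Sh * T + (1 - T)).det := hBT ▸ hdet2
  have h1 := range_step T Sh hTidem hdet2'
  have h2 := range_step T Shᵀ hTidem hdet1'
  set v : ι → ℝ := T.mulVec u with hv
  have hAw : (T * Sh * T).mulVec
      (T.mulVec ((T * Sh * T + (1 - T))⁻¹.mulVec v)) = v := by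
    rw [Matrix.mulVec_mulVec, Matrix.mulVec_mulVec, mul_assoc _ T _, h1, hv,
      Matrix.mulVec_mulVec, hTidem]
  have hAtw' : (T * Sh * T)ᵀ.mulVec
      (T.mulVec ((T * Shᵀ * T + (1 - T))⁻¹.mulVec v)) = v := by
    have ht : (T * Sh * T)ᵀ = T * Shᵀ * T := by
      rw [transpose_mul, transpose_mul, hTsymm, mul_assoc]
    rw [ht, Matrix.mulVec_mulVec, Matrix.mulVec_mulVec, mul_assoc _ T _, h2, hv,
      Matrix.mulVec_mulVec, hTidem]
  set w : ι → ℝ := T.mulVec ((T * Sh * T + (1 - T))⁻¹.mulVec v) with hw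
  set w' : ι → ℝ := T.mulVec ((T * Shᵀ * T + (1 - T))⁻¹.mulVec v) with hw'
  have chain : v ⬝ᵥ G.mulVec v = w' ⬝ᵥ v := by
    calc v ⬝ᵥ G.mulVec v
        = ((T * Sh * T)ᵀ.mulVec w') ⬝ᵥ G.mulVec ((T * Sh * T).mulVec w) := by
          rw [hAtw', hAw]
      _ = w' ⬝ᵥ (T * Sh * T).mulVec (G.mulVec ((T * Sh * T).mulVec w)) := by
          rw [Matrix.mulVec_transpose, ← Matrix.dotProduct_mulVec]
      _ = w' ⬝ᵥ ((T * Sh * T) * G * (T * Sh * T)).mulVec w := by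
          rw [Matrix.mulVec_mulVec, Matrix.mulVec_mulVec]
      _ = w' ⬝ᵥ v := by rw [hG, hAw]
  rw [chain, hw']
  rw [show (T * Shᵀ * T + (1 - T)) = Bmat T Sh from rfl]
  rw [Matrix.inv_def, Ring.inverse_eq_inv', Matrix.smul_mulVec,
    Matrix.mulVec_smul, smul_dotProduct, smul_eq_mul, numf, div_eq_inv_mul]

/-- positivity and invertibility at the limit point -/
lemma base_pos (T S0 : Matrix ι ι ℝ) (q0 : ι → ℝ) (hTsymm : Tᵀ = T) (hTidem : T * T = T)
    (hS0symm : S0ᵀ = S0)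
    (hpos : ∀ x : ι → ℝ, x ≠ 0 → 0 < x ⬝ᵥ S0.mulVec x)
    (hv : T.mulVec q0 ≠ 0) :
    (Bmat T S0).det ≠ 0 ∧ 0 < numf T S0 q0 / (Bmat T S0).det := by
  have hB : Bmat T S0 = T * S0 * T + (1 - T) := by rw [Bmat, hS0symm]
  -- quadratic form of B is positive definite
  have hBpos : ∀ x : ι → ℝ, x ≠ 0 → 0 < x ⬝ᵥ (Bmat T S0).mulVec x := by
    intro x hx
    rw [hB, Matrix.add_mulVec, dotProduct_add]
    have e1 : x ⬝ᵥ (T * S0 * T).mulVec x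
        = (T.mulVec x) ⬝ᵥ S0.mulVec (T.mulVec x) := by
      rw [← Matrix.mulVec_mulVec, ← Matrix.mulVec_mulVec,
        Matrix.dotProduct_mulVec x T, ← Matrix.mulVec_transpose, hTsymm]
    have hone : (1 - T) * (1 - T) = 1 - T := by
      rw [sub_mul, one_mul, mul_sub, mul_one, hTidem]; abel
    have e2 : x ⬝ᵥ (1 - T).mulVec x
        = ((1 - T).mulVec x) ⬝ᵥ ((1 - T).mulVec x) := by
      have hsymm1 : (1 - T)ᵀ = 1 - T := by rw [transpose_sub, transpose_one, hTsymm]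
      conv_lhs => rw [← hone, ← Matrix.mulVec_mulVec,
        Matrix.dotProduct_mulVec x (1 - T), ← Matrix.mulVec_transpose, hsymm1]
    rw [e1, e2]
    by_cases hTx : T.mulVec x = 0
    · have hx2 : (1 - T).mulVec x = x := by
        rw [Matrix.sub_mulVec, Matrix.one_mulVec, hTx, sub_zero]
      rw [hTx, hx2]
      simp only [Matrix.mulVec_zero, dotProduct_zero]
      have : x ⬝ᵥ x ≠ 0 := fun hc => hx (dotProduct_self_eq_zero.1 hc)
      have h2 : 0 ≤ x ⬝ᵥ x := Finset.sum_nonneg fun i _ => mul_self_nonneg _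
      cases' lt_or_eq_of_le h2 with h h
      · linarith
      · exact absurd h.symm this
    · have h1 := hpos _ hTx
      have h2 : 0 ≤ ((1 - T).mulVec x) ⬝ᵥ ((1 - T).mulVec x) :=
        Finset.sum_nonneg fun i _ => mul_self_nonneg _
      linarith
  have hdet : (Bmat T S0).det ≠ 0 := by
    intro hc
    obtain ⟨y, hy0, hy⟩ := (Matrix.exists_mulVec_eq_zero_iff).2 hc
    have := hBpos y hy0
    rw [hy, dotProduct_zero] at this
    exact lt_irrefl _ this
  refine ⟨hdet, ?_⟩
  have hdetU : IsUnit (Bmat T S0).det := isUnit_iff_ne_zero.2 hdet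
  -- rewrite num/det as a positive quadratic form value
  set v : ι → ℝ := T.mulVec q0 with hvdef
  set u : ι → ℝ := (Bmat T S0)⁻¹.mulVec v with hu
  have hval : numf T S0 q0 / (Bmat T S0).det = (T.mulVec u) ⬝ᵥ v := by
    rw [hu, Matrix.inv_def, Ring.inverse_eq_inv', Matrix.smul_mulVec,
      Matrix.mulVec_smul, smul_dotProduct, smul_eq_mul, numf, div_eq_inv_mul]
  rw [hval]
  have hBu : (Bmat T S0).mulVec u = v := by
    rw [hu, Matrix.mulVec_mulVec, Matrix.mul_nonsing_inv _ hdetU, Matrix.one_mulVec]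
  have hu0 : u ≠ 0 := by
    intro hc
    rw [hc, Matrix.mulVec_zero] at hBu
    exact hv hBu.symm
  have hTvv : T.mulVec v = v := by rw [hvdef, Matrix.mulVec_mulVec, hTidem]
  have e3 : (T.mulVec u) ⬝ᵥ v = u ⬝ᵥ v := by
    have hvT : v ᵥ* T = v := by
      rw [← Matrix.mulVec_transpose, hTsymm]; exact hTvv
    calc (T.mulVec u) ⬝ᵥ v = v ⬝ᵥ T.mulVec u := dotProduct_comm _ _
      _ = (v ᵥ* T) ⬝ᵥ u := Matrix.dotProduct_mulVec _ _ _
      _ = v ⬝ᵥ u := by rw [hvT]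
      _ = u ⬝ᵥ v := dotProduct_comm _ _
  rw [e3, ← hBu]
  exact hBpos u hu0

lemma box_subset_nhds_matrix (S0 : Matrix ι ι ℝ) (U : Set (Matrix ι ι ℝ)) (hU : U ∈ 𝓝 S0) :
    ∃ δ > 0, ∀ Sh : Matrix ι ι ℝ, (∀ a b, |Sh a b - S0 a b| < δ) → Sh ∈ U := by
  have h' : U ∈ @nhds (ι → ι → ℝ) _ S0 := hU
  rcases Metric.mem_nhds_iff.1 h' with ⟨ε, hε, hball⟩
  refine ⟨ε/2, by linarith, fun Sh hSh => hball ?_⟩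
  change @dist (ι → ι → ℝ) _ (fun a b => Sh a b) (fun a b => S0 a b) < ε
  rw [dist_pi_lt_iff hε]
  intro a
  rw [dist_pi_lt_iff hε]
  intro b
  rw [Real.dist_eq]
  exact lt_of_lt_of_le (hSh a b) (by linarith)

lemma box_subset_nhds_vec (q0 : ι → ℝ) (U : Set (ι → ℝ)) (hU : U ∈ 𝓝 q0) :
    ∃ δ > 0, ∀ qv : ι → ℝ, (∀ a, |qv a - q0 a| < δ) → qv ∈ U := by
  rcases Metric.mem_nhds_iff.1 hU with ⟨ε, hε, hball⟩
  refine ⟨ε/2, by linarith, fun qv hqv => hball ?_⟩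
  rw [Metric.mem_ball, dist_pi_lt_iff hε]
  intro a
  rw [Real.dist_eq]
  exact lt_of_lt_of_le (hqv a) (by linarith)

lemma key_box (T S0 : Matrix ι ι ℝ) (q0 : ι → ℝ) (c : ℝ)
    (hdet : (Bmat T S0).det ≠ 0) (hdetT : (Bmat T S0ᵀ).det ≠ 0)
    (hcval : numf T S0 q0 / (Bmat T S0).det = c) (hc : 0 < c) :
    ∃ δ > 0, ∀ (Sh : Matrix ι ι ℝ) (qv : ι → ℝ),
      (∀ a b, |Sh a b - S0 a b| < δ) → (∀ a, |qv a - q0 a| < δ) →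
      IsUnit (Bmat T Sh).det ∧ IsUnit (Bmat T Shᵀ).det ∧
        c / 2 < numf T Sh qv / (Bmat T Sh).det := by
  -- continuity of the three relevant functions
  have hBcont : Continuous fun z : Matrix ι ι ℝ × (ι → ℝ) => Bmat T z.1 :=
    ((continuous_const.matrix_mul
      ((continuous_fst : Continuous fun z : Matrix ι ι ℝ × (ι → ℝ) => z.1).matrix_transpose)).matrix_mul
      continuous_const).add continuous_const
  have hBTcont : Continuous fun z : Matrix ι ι ℝ × (ι → ℝ) => Bmat T z.1ᵀ :=
    ((continuous_const.matrix_mul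
      ((continuous_fst : Continuous fun z : Matrix ι ι ℝ × (ι → ℝ) => z.1).matrix_transpose.matrix_transpose)).matrix_mul
      continuous_const).add continuous_const
  have hvcont : Continuous fun z : Matrix ι ι ℝ × (ι → ℝ) => T.mulVec z.2 :=
    continuous_const.matrix_mulVec continuous_snd
  have hnumcont : Continuous fun z : Matrix ι ι ℝ × (ι → ℝ) => numf T z.1 z.2 :=
    (continuous_const.matrix_mulVec
      ((hBcont.matrix_adjugate).matrix_mulVec hvcont)).dotProduct hvcont
  have hφ : ContinuousAt (fun z : Matrix ι ι ℝ × (ι → ℝ) =>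
      ((Bmat T z.1).det, (Bmat T z.1ᵀ).det, numf T z.1 z.2 / (Bmat T z.1).det))
      (S0, q0) := by
    refine ContinuousAt.prodMk ?_ (ContinuousAt.prodMk ?_ ?_)
    · exact (hBcont.matrix_det).continuousAt
    · exact (hBTcont.matrix_det).continuousAt
    · exact ContinuousAt.div (hnumcont.continuousAt) (hBcont.matrix_det).continuousAt hdet
  set V : Set (ℝ × ℝ × ℝ) := {y | y.1 ≠ 0 ∧ y.2.1 ≠ 0 ∧ c / 2 < y.2.2} with hV
  have hVopen : IsOpen V := by
    refine IsOpen.inter (isOpen_compl_singleton.preimage continuous_fst) ?_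
    refine IsOpen.inter ?_ ?_
    · exact isOpen_compl_singleton.preimage (continuous_fst.comp continuous_snd)
    · exact (isOpen_Ioi.preimage (continuous_snd.comp continuous_snd))
  have hmemV : ((Bmat T S0).det, (Bmat T S0ᵀ).det, numf T S0 q0 / (Bmat T S0).det) ∈ V := by
    exact ⟨hdet, hdetT, by rw [hcval]; linarith⟩
  have hpre : (fun z : Matrix ι ι ℝ × (ι → ℝ) =>
      ((Bmat T z.1).det, (Bmat T z.1ᵀ).det, numf T z.1 z.2 / (Bmat T z.1).det)) ⁻¹' V
      ∈ 𝓝 (S0, q0) := hφ (hVopen.mem_nhds hmemV)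
  rw [nhds_prod_eq, Filter.mem_prod_iff] at hpre
  obtain ⟨U1, hU1, U2, hU2, hsub⟩ := hpre
  obtain ⟨δ1, hδ1, hbox1⟩ := box_subset_nhds_matrix S0 U1 hU1
  obtain ⟨δ2, hδ2, hbox2⟩ := box_subset_nhds_vec q0 U2 hU2
  refine ⟨min δ1 δ2, lt_min hδ1 hδ2, fun Sh qv hSh hqv => ?_⟩
  have h1 : Sh ∈ U1 := hbox1 Sh fun a b => lt_of_lt_of_le (hSh a b) (min_le_left _ _)
  have h2 : qv ∈ U2 := hbox2 qv fun a => lt_of_lt_of_le (hqv a) (min_le_right _ _)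
  have := hsub (Set.mk_mem_prod h1 h2)
  simp only [Set.mem_preimage, hV, Set.mem_setOf_eq] at this
  exact ⟨isUnit_iff_ne_zero.2 this.1, isUnit_iff_ne_zero.2 this.2.1, this.2.2⟩

lemma ecdf_mono' (nn : ℕ) (x : ℕ → ℝ) : Monotone (ecdf nn x) := by
  intro s t hst
  unfold ecdf
  apply div_le_div_of_nonneg_right ?_ (Nat.cast_nonneg nn)
  apply Finset.sum_le_sum
  intro j _
  · 
    by_cases h : x j ≤ s
    · rw [if_pos h, if_pos (h.trans hst)]
    · rw [if_neg h]
      by_cases h' : x j ≤ t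
      · rw [if_pos h']; norm_num
      · rw [if_neg h']

lemma sampleQuantile_le (nn : ℕ) (hnn : 0 < nn) (x : ℕ → ℝ) (p : ℝ) (hp : 0 < p)
    (t : ℝ) (h : p ≤ ecdf nn x t) : sampleQuantile nn x p ≤ t := by
  have hbdd : BddBelow {s : ℝ | p ≤ ecdf nn x s} := by
    have hne : (Finset.range nn).Nonempty := ⟨0, Finset.mem_range.2 hnn⟩
    refine ⟨(Finset.range nn).inf' hne x, fun s hs => ?_⟩
    by_contra hlt
    push_neg at hlt
    have : ecdf nn x s = 0 := by
      unfold ecdf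
      rw [Finset.sum_eq_zero, zero_div]
      intro j hj
      rw [if_neg]
      intro hle
      exact absurd (le_trans (Finset.inf'_le x hj) hle) (not_le.2 hlt)
    rw [Set.mem_setOf_eq, this] at hs
    linarith
  exact csInf_le hbdd h

lemma le_sampleQuantile (nn : ℕ) (hnn : 0 < nn) (x : ℕ → ℝ) (p : ℝ) (hp1 : p ≤ 1)
    (t : ℝ) (h : ecdf nn x t < p) : t ≤ sampleQuantile nn x p := by
  have hne : (Finset.range nn).Nonempty := ⟨0, Finset.mem_range.2 hnn⟩
  have hmem : (Finset.range nn).sup' hne x ∈ {s : ℝ | p ≤ ecdf nn x s} := by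
    have : ecdf nn (x) ((Finset.range nn).sup' hne x) = 1 := by
      unfold ecdf
      rw [Finset.sum_congr rfl fun j hj => if_pos (Finset.le_sup' x hj)]
      rw [Finset.sum_const, Finset.card_range, nsmul_eq_mul, mul_one]
      field_simp
    rw [Set.mem_setOf_eq, this]
    exact hp1
  refine le_csInf ⟨_, hmem⟩ fun s hs => ?_
  by_contra hlt
  push_neg at hlt
  have := ecdf_mono' nn x hlt.le
  rw [Set.mem_setOf_eq] at hs
  have := lt_of_le_of_lt (le_trans hs this) h
  exact lt_irrefl _ this

/-- bracketing of the sample quantile from ecdf closeness at two points. -/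
lemma sampleQuantile_bracket (nn : ℕ) (hnn : 0 < nn) (x : ℕ → ℝ) (p : ℝ)
    (hp : 0 < p) (hp1 : p ≤ 1) (F : ℝ → ℝ) (tlo thi η : ℝ) (hη : 0 < η)
    (h1 : p + η ≤ F thi) (h2 : F tlo ≤ p - η)
    (hclo : |ecdf nn x tlo - F tlo| < η) (hchi : |ecdf nn x thi - F thi| < η) :
    tlo ≤ sampleQuantile nn x p ∧ sampleQuantile nn x p ≤ thi := by
  constructor
  · refine le_sampleQuantile nn hnn x p hp1 tlo ?_
    have := (abs_lt.1 hclo).2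
    linarith
  · refine sampleQuantile_le nn hnn x p hp thi ?_
    have := (abs_lt.1 hchi).1
    linarith

/-- the population quantile satisfies `F (qf F p) = p` for continuous CDFs. -/
lemma qf_eq (F : ℝ → ℝ) (hcont : Continuous F) (hmono : Monotone F)
    (h0 : Tendsto F atBot (𝓝 0)) (h1 : Tendsto F atTop (𝓝 1))
    (p : ℝ) (hp : 0 < p) (hp1 : p < 1) : F (qf F p) = p := by
  obtain ⟨thi, hthi⟩ : ∃ t, p ≤ F t := by
    have := h1.eventually (eventually_gt_nhds hp1)
    rcases this.exists with ⟨t, ht⟩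
    exact ⟨t, ht.le⟩
  obtain ⟨tlo, htlo⟩ : ∃ t, F t < p := by
    have := h0.eventually (eventually_lt_nhds hp)
    exact this.exists
  have hne : {t : ℝ | p ≤ F t}.Nonempty := ⟨thi, hthi⟩
  have hbdd : BddBelow {t : ℝ | p ≤ F t} := by
    refine ⟨tlo, fun s hs => ?_⟩
    by_contra hlt
    push_neg at hlt
    exact absurd (le_trans hs (hmono hlt.le)) (not_le.2 htlo)
  have hclosed : IsClosed {t : ℝ | p ≤ F t} := isClosed_le continuous_const hcont
  have hmem : qf F p ∈ {t : ℝ | p ≤ F t} := hclosed.csInf_mem hne hbdd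
  refine le_antisymm ?_ hmem
  by_contra hgt
  push_neg at hgt
  have htlo_lt : tlo < qf F p := by
    by_contra hge
    push_neg at hge
    exact absurd (le_trans hmem (hmono hge)) (not_le.2 htlo)
  obtain ⟨s, hs, hFs⟩ := intermediate_value_Icc htlo_lt.le hcont.continuousOn
    (Set.mem_Icc.2 ⟨htlo.le, hmem⟩)
  have : qf F p ≤ s := csInf_le hbdd (le_of_eq hFs.symm)
  have := hmono this
  rw [hFs] at this
  linarith

variable {Ω : Type*} [MeasurableSpace Ω] (P : Measure Ω) [IsProbabilityMeasure P]

lemma cdf_props (X : Ω → ℝ) (hX : Measurable X) (Fi : ℝ → ℝ)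
    (hd : ∀ t, (P {ω | X ω ≤ t}).toReal = Fi t) :
    Monotone Fi ∧ Tendsto Fi atBot (𝓝 0) ∧ Tendsto Fi atTop (𝓝 1) := by
  have : IsProbabilityMeasure (P.map X) := Measure.isProbabilityMeasure_map hX.aemeasurable
  have hmap : Fi = cdf (P.map X) := by
    funext t
    rw [cdf_eq_real, measureReal_def, Measure.map_apply hX measurableSet_Iic]
    exact (hd t).symm
  rw [hmap]
  exact ⟨(cdf (P.map X)).mono, tendsto_cdf_atBot _, tendsto_cdf_atTop _⟩

/-- Chebyshev bound for the empirical CDF at a fixed point. -/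
lemma ecdf_chebyshev (X : ℕ → Ω → ℝ) (hmeas : ∀ j, Measurable (X j))
    (hind : Pairwise fun j j' => IndepFun (X j) (X j') P)
    (t Ft : ℝ) (hd : ∀ j, (P {ω | X j ω ≤ t}).toReal = Ft)
    (nn : ℕ) (hnn : 0 < nn) (η : ℝ) (hη : 0 < η) :
    P {ω | η ≤ |ecdf nn (fun j => X j ω) t - Ft|}
      ≤ ENNReal.ofReal (1 / (nn * η ^ 2)) := by
  set Z : ℕ → Ω → ℝ := fun j ω => if X j ω ≤ t then 1 else 0 with hZ
  have hZmeas : ∀ j, Measurable (Z j) := by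
    intro j
    exact Measurable.ite ((hmeas j) measurableSet_Iic) measurable_const measurable_const
  have hZbd : ∀ j ω, |Z j ω| ≤ 1 := by
    intro j ω
    by_cases h : X j ω ≤ t <;> simp [hZ, h]
  have hZmem : ∀ j, MemLp (Z j) 2 P := fun j =>
    MemLp.of_bound (hZmeas j).aestronglyMeasurable 1
      (Filter.Eventually.of_forall fun ω => by rw [Real.norm_eq_abs]; exact hZbd j ω)
  have hZint : ∀ j, ∫ ω, Z j ω ∂P = Ft := by
    intro j
    have : Z j = Set.indicator {ω | X j ω ≤ t} (fun _ => (1:ℝ)) := by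
      funext ω
      rw [Set.indicator_apply]
      rfl
    rw [this, MeasureTheory.integral_indicator_const (1:ℝ)
      (show MeasurableSet {ω | X j ω ≤ t} from (hmeas j) measurableSet_Iic),
      smul_eq_mul, mul_one]
    exact hd j
  have hZvar : ∀ j, variance (Z j) P ≤ 1 := by
    intro j
    refine le_trans (variance_le_expectation_sq (hZmeas j).aestronglyMeasurable) ?_
    have : ∀ ω, (Z j ω) ^ 2 ≤ 1 := by
      intro ω
      by_cases h : X j ω ≤ t <;> simp [hZ, h]
    calc ∫ ω, (Z j ^ 2) ω ∂P ≤ ∫ _ω, (1:ℝ) ∂P := by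
          refine integral_mono_of_nonneg (Filter.Eventually.of_forall fun ω => sq_nonneg _)
            (integrable_const 1) (Filter.Eventually.of_forall fun ω => this ω)
      _ = 1 := by simp
  set Sn : Ω → ℝ := fun ω => ∑ j ∈ range nn, Z j ω with hSn
  have hSmem : MemLp Sn 2 P := by
    have h := memLp_finsetSum' (μ := P) (range nn) (fun j _ => hZmem j)
    have he : (∑ j ∈ range nn, Z j) = Sn := by funext ω; simp [hSn]
    rwa [he] at h
  have hSint : ∫ ω, Sn ω ∂P = nn * Ft := by
    rw [hSn]
    rw [integral_finset_sum _ fun j _ => (hZmem j).integrable one_le_two]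
    rw [Finset.sum_congr rfl fun j _ => hZint j, Finset.sum_const, card_range,
      nsmul_eq_mul]
  have hSvar : variance Sn P ≤ nn := by
    have hvs : variance (∑ j ∈ range nn, Z j) P = ∑ j ∈ range nn, variance (Z j) P := by
      refine IndepFun.variance_sum (fun j _ => hZmem j) ?_
      intro j _ j' _ hjj'
      exact ((hind hjj').comp
        (Measurable.ite measurableSet_Iic measurable_const measurable_const)
        (Measurable.ite measurableSet_Iic measurable_const measurable_const))
    have : variance Sn P = ∑ j ∈ range nn, variance (Z j) P := by
      rw [← hvs]
      congr 1
      funext ω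
      simp [hSn]
    rw [this]
    calc ∑ j ∈ range nn, variance (Z j) P ≤ ∑ _j ∈ range nn, (1:ℝ) :=
          Finset.sum_le_sum fun j _ => hZvar j
      _ = nn := by simp
  have hcheb := meas_ge_le_variance_div_sq (μ := P) hSmem
    (c := nn * η) (by positivity)
  rw [hSint] at hcheb
  refine le_trans (measure_mono ?_) (le_trans hcheb ?_)
  · intro ω hω
    rw [Set.mem_setOf_eq] at hω ⊢
    have hecdf : ecdf nn (fun j => X j ω) t = Sn ω / nn := rfl
    have hnn' : (0:ℝ) < nn := by exact_mod_cast hnn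
    have : |Sn ω - nn * Ft| = nn * |ecdf nn (fun j => X j ω) t - Ft| := by
      rw [hecdf, ← abs_of_pos hnn', ← abs_mul]
      congr 1
      rw [abs_of_pos hnn']
      field_simp
    rw [this]
    calc (nn:ℝ) * η ≤ (nn:ℝ) * |ecdf nn (fun j => X j ω) t - Ft| := by
          exact mul_le_mul_of_nonneg_left hω hnn'.le
      _ = _ := rfl
  · apply ENNReal.ofReal_le_ofReal
    have hnn' : (0:ℝ) < nn := by exact_mod_cast hnn
    rw [div_le_div_iff₀ (by positivity) (by positivity), one_mul]
    calc variance Sn P * ((nn:ℝ) * η^2) ≤ (nn:ℝ) * ((nn:ℝ) * η^2) :=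
          mul_le_mul_of_nonneg_right hSvar (by positivity)
      _ = ((nn:ℝ)*η)^2 := by ring


lemma ecdf_wlln (X : ℕ → Ω → ℝ) (hmeas : ∀ j, Measurable (X j))
    (hind : Pairwise fun j j' => IndepFun (X j) (X j') P)
    (t Ft : ℝ) (hd : ∀ j, (P {ω | X j ω ≤ t}).toReal = Ft)
    (N : ℕ → ℕ) (hN : Tendsto N atTop atTop) (η : ℝ) (hη : 0 < η) :
    Tendsto (fun ν => P {ω | η ≤ |ecdf (N ν) (fun j => X j ω) t - Ft|}) atTop (𝓝 0) := by
  have hub : ∀ᶠ ν in atTop,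
      P {ω | η ≤ |ecdf (N ν) (fun j => X j ω) t - Ft|}
        ≤ ENNReal.ofReal (1 / (N ν * η ^ 2)) :=
    (hN.eventually_ge_atTop 1).mono fun ν hν =>
      ecdf_chebyshev P X hmeas hind t Ft hd (N ν) hν η hη
  have h0 : Tendsto (fun ν => ENNReal.ofReal (1 / (N ν * η ^ 2))) atTop (𝓝 0) := by
    rw [← ENNReal.ofReal_zero]
    apply ENNReal.tendsto_ofReal
    simp only [one_div]
    apply Filter.Tendsto.inv_tendsto_atTop
    exact Tendsto.atTop_mul_const (by positivity)
      (tendsto_natCast_atTop_atTop.comp hN)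
  exact tendsto_of_tendsto_of_tendsto_of_le_of_le' tendsto_const_nhds h0
    (Filter.Eventually.of_forall fun ν => zero_le) hub


end Stmt3Aux

/-- under `H₁ : T q ≠ 0` the Wald-type statistic
`Sₙ(T) = n (T q̂)ᵀ Gₙ (T q̂)` converges in probability to `∞`: for every `C > 0`,
`P(Sₙ(T) ≤ C) → 0`. Here `Gₙ` is a Moore–Penrose inverse of `T Σ̂ₙ Tᵀ` and `Σ̂ₙ → Σ`
in probability. -/
theorem statement3
    {Ω : Type*} [MeasurableSpace Ω] (P : Measure Ω) [IsProbabilityMeasure P]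
    (k m : ℕ) (p : Fin m → ℝ)
    (hp0 : ∀ r, 0 < p r) (hp1 : ∀ r, p r < 1) (hpmono : StrictMono p)
    (F : Fin k → ℝ → ℝ) (hFcont : ∀ i, Continuous (F i))
    (X : Fin k → ℕ → Ω → ℝ) (hmeas : ∀ i j, Measurable (X i j))
    (hindep : iIndepFun
      (fun pr : Fin k × ℕ => X pr.1 pr.2) P)
    (hdist : ∀ i j t, (P {ω | X i j ω ≤ t}).toReal = F i t)
    (N : ℕ → Fin k → ℕ) (n : ℕ → ℕ) (hn : ∀ ν, n ν = ∑ i, N ν i)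
    (κ : Fin k → ℝ) (hκ : ∀ i, 0 < κ i ∧ κ i < 1)
    (hNlim : ∀ i, Tendsto (fun ν => N ν i) atTop atTop)
    (hκlim : ∀ i, Tendsto (fun ν => (N ν i : ℝ) / (n ν)) atTop (𝓝 (κ i)))
    (f : Fin k → ℝ → ℝ)
    -- Assumption 1: each `F i` is continuously differentiable at `q_{ir}` with positive derivative
    (hf : ∀ i r, (∀ᶠ x in 𝓝 (qf (F i) (p r)), HasDerivAt (F i) (f i x) x)
        ∧ ContinuousAt (f i) (qf (F i) (p r)) ∧ 0 < f i (qf (F i) (p r)))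
    -- the limiting block-diagonal covariance matrix Σ = diag(Σ⁽¹⁾, …, Σ⁽ᵏ⁾)
    (S : Matrix (Fin k × Fin m) (Fin k × Fin m) ℝ)
    (hS : ∀ x y : Fin k × Fin m, S x y =
      if x.1 = y.1 then
        (min (p x.2) (p y.2) - p x.2 * p y.2) /
          (κ x.1 * f x.1 (qf (F x.1) (p x.2)) * f x.1 (qf (F x.1) (p y.2)))
      else 0)
    -- the contrast projection matrix T
    (T : Matrix (Fin k × Fin m) (Fin k × Fin m) ℝ)
    (hTsymm : Tᵀ = T) (hTidem : T * T = T) (hT1 : T.mulVec (fun _ => 1) = 0)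
    -- the alternative H₁ : T q ≠ 0
    (hH1 : T.mulVec (fun x => qf (F x.1) (p x.2)) ≠ 0)
    -- covariance estimators converging in probability to Σ
    (Shat : ℕ → Ω → Matrix (Fin k × Fin m) (Fin k × Fin m) ℝ)
    (hShat : ∀ ε > (0 : ℝ), ∀ x y,
      Tendsto (fun ν => P {ω | ε ≤ |Shat ν ω x y - S x y|}) atTop (𝓝 0))
    -- for each sample point, a Moore–Penrose inverse of `T Σ̂ₙ Tᵀ`
    (G : ℕ → Ω → Matrix (Fin k × Fin m) (Fin k × Fin m) ℝ)
    (hG : ∀ ν ω, IsMoorePenrose (T * Shat ν ω * Tᵀ) (G ν ω)) :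
    ∀ C > (0 : ℝ),
      Tendsto (fun ν => P {ω |
        (n ν : ℝ) *
          (T.mulVec (fun x => sampleQuantile (N ν x.1) (fun j => X x.1 j ω) (p x.2)) ⬝ᵥ
            (G ν ω).mulVec
              (T.mulVec (fun x => sampleQuantile (N ν x.1) (fun j => X x.1 j ω) (p x.2))))
          ≤ C}) atTop (𝓝 0) := by
  intro C hC
  classical
  -- degenerate case: empty index type contradicts H₁
  by_cases hempty : IsEmpty (Fin k × Fin m)
  · exact absurd (funext fun x => (hempty.elim x)) hH1
  rw [not_isEmpty_iff] at hempty
  obtain ⟨⟨i0, r0⟩⟩ := hempty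
  set q : Fin k × Fin m → ℝ := fun x => qf (F x.1) (p x.2) with hq
  -- CDF properties
  have hcdf : ∀ i, Monotone (F i) ∧ Tendsto (F i) atBot (𝓝 0) ∧
      Tendsto (F i) atTop (𝓝 1) :=
    fun i => Stmt3Aux.cdf_props P (X i 0) (hmeas i 0) (F i) (fun t => hdist i 0 t)
  have hFq : ∀ i r, F i (qf (F i) (p r)) = p r := fun i r =>
    Stmt3Aux.qf_eq (F i) (hFcont i) (hcdf i).1 (hcdf i).2.1 (hcdf i).2.2
      (p r) (hp0 r) (hp1 r)
  -- positivity of Σ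
  have hSpos : ∀ x : Fin k × Fin m → ℝ, x ≠ 0 → 0 < x ⬝ᵥ S.mulVec x :=
    Stmt3Aux.S_quadform p hp0 hp1 hpmono κ (fun i => (hκ i).1)
      (fun i r => f i (qf (F i) (p r))) (fun i r => (hf i r).2.2) S hS
  -- symmetry of Σ
  have hSsymm : Sᵀ = S := by
    ext x y
    rw [Matrix.transpose_apply, hS, hS]
    obtain ⟨x1, x2⟩ := x; obtain ⟨y1, y2⟩ := y
    by_cases h : x1 = y1
    · subst h
      simp only [if_pos rfl]
      rw [min_comm]
      ring
    · rw [if_neg (fun hc => h hc.symm), if_neg h]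
  -- the limiting value of the quadratic form
  obtain ⟨hdet0, hcpos⟩ :=
    Stmt3Aux.base_pos T S q hTsymm hTidem hSsymm hSpos hH1
  set c : ℝ := Stmt3Aux.numf T S q / (Stmt3Aux.Bmat T S).det with hcdef
  have hdetT0 : (Stmt3Aux.Bmat T Sᵀ).det ≠ 0 := by rw [hSsymm]; exact hdet0
  obtain ⟨δ, hδ, hbox⟩ := Stmt3Aux.key_box T S q c hdet0 hdetT0 rfl hcpos
  -- per-coordinate quantile bracketing data
  have hquant : ∀ x : Fin k × Fin m, ∃ tlo thi η : ℝ, 0 < η ∧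
      q x - δ < tlo ∧ thi < q x + δ ∧
      p x.2 + η ≤ F x.1 thi ∧ F x.1 tlo ≤ p x.2 - η := by
    rintro ⟨i, r⟩
    obtain ⟨hev, hcontf, hfpos⟩ := hf i r
    set q0 : ℝ := qf (F i) (p r) with hq0
    have hevpos : ∀ᶠ y in 𝓝 q0, 0 < f i y :=
      hcontf.eventually (eventually_gt_nhds hfpos)
    have hboth := hev.and hevpos
    rcases Metric.eventually_nhds_iff.1 hboth with ⟨ρ, hρ, hball⟩
    set δ0 : ℝ := min (δ/2) (ρ/2) with hδ0
    have hδ0pos : 0 < δ0 := lt_min (by linarith) (by linarith)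
    have hδ0le : δ0 ≤ δ/2 := min_le_left _ _
    have hδ0le2 : δ0 ≤ ρ/2 := min_le_right _ _
    have hIcc : ∀ y ∈ Set.Icc (q0 - δ0) (q0 + δ0),
        HasDerivAt (F i) (f i y) y ∧ 0 < f i y := by
      intro y hy
      rw [Set.mem_Icc] at hy
      apply hball
      rw [Real.dist_eq]
      have : |y - q0| ≤ δ0 := abs_le.2 ⟨by linarith [hy.1], by linarith [hy.2]⟩
      linarith
    have hmonoI : StrictMonoOn (F i) (Set.Icc (q0 - δ0) (q0 + δ0)) := by
      apply strictMonoOn_of_deriv_pos (convex_Icc _ _) ((hFcont i).continuousOn)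
      intro y hy
      rw [interior_Icc, Set.mem_Ioo] at hy
      have h := hIcc y (Set.mem_Icc.2 ⟨hy.1.le, hy.2.le⟩)
      rw [h.1.deriv]
      exact h.2
    have hmemlo : q0 - δ0 ∈ Set.Icc (q0 - δ0) (q0 + δ0) :=
      Set.mem_Icc.2 ⟨le_rfl, by linarith⟩
    have hmemmid : q0 ∈ Set.Icc (q0 - δ0) (q0 + δ0) :=
      Set.mem_Icc.2 ⟨by linarith, by linarith⟩
    have hmemhi : q0 + δ0 ∈ Set.Icc (q0 - δ0) (q0 + δ0) :=
      Set.mem_Icc.2 ⟨by linarith, le_rfl⟩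
    have hlo_lt : F i (q0 - δ0) < p r := by
      have := hmonoI hmemlo hmemmid (by linarith)
      rwa [hFq i r] at this
    have hhi_gt : p r < F i (q0 + δ0) := by
      have := hmonoI hmemmid hmemhi (by linarith)
      rwa [hFq i r] at this
    refine ⟨q0 - δ0, q0 + δ0,
      min (p r - F i (q0 - δ0)) (F i (q0 + δ0) - p r) / 2, ?_, ?_, ?_, ?_, ?_⟩
    · have h1 : 0 < p r - F i (q0 - δ0) := by linarith
      have h2 : 0 < F i (q0 + δ0) - p r := by linarith
      have := lt_min h1 h2
      linarith
    · show q ⟨i, r⟩ - δ < q0 - δ0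
      have : q ⟨i, r⟩ = q0 := rfl
      rw [this]
      linarith
    · show q0 + δ0 < q ⟨i, r⟩ + δ
      have : q ⟨i, r⟩ = q0 := rfl
      rw [this]
      linarith
    · have := min_le_right (p r - F i (q0 - δ0)) (F i (q0 + δ0) - p r)
      simp only []
      linarith
    · have := min_le_left (p r - F i (q0 - δ0)) (F i (q0 + δ0) - p r)
      simp only []
      linarith
  choose tlo thi η hη hlo hhi hFhi hFlo using hquant
  -- limits of the bad-event probabilities
  have hQlim : ∀ (x : Fin k × Fin m) (t : ℝ),
      Tendsto (fun ν => P {ω | η x ≤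
        |ecdf (N ν x.1) (fun j => X x.1 j ω) t - F x.1 t|}) atTop (𝓝 0) := by
    intro x t
    refine Stmt3Aux.ecdf_wlln P (X x.1) (fun j => hmeas x.1 j) ?_ t (F x.1 t)
      (fun j => hdist x.1 j t) (fun ν => N ν x.1) (hNlim x.1) (η x) (hη x)
    intro j j' hjj'
    exact hindep.indepFun (show (⟨x.1, j⟩ : Fin k × ℕ) ≠ ⟨x.1, j'⟩ by
      simp [Prod.ext_iff, hjj'])
  -- total bound
  set bound : ℕ → ENNReal := fun ν =>
    (∑ z : (Fin k × Fin m) × (Fin k × Fin m),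
        P {ω | δ ≤ |Shat ν ω z.1 z.2 - S z.1 z.2|})
    + ((∑ x : Fin k × Fin m, P {ω | η x ≤
          |ecdf (N ν x.1) (fun j => X x.1 j ω) (tlo x) - F x.1 (tlo x)|})
      + (∑ x : Fin k × Fin m, P {ω | η x ≤
          |ecdf (N ν x.1) (fun j => X x.1 j ω) (thi x) - F x.1 (thi x)|}))
      with hbound
  have hboundlim : Tendsto bound atTop (𝓝 0) := by
    rw [show (0 : ENNReal) = 0 + (0 + 0) by simp]
    refine Tendsto.add ?_ (Tendsto.add ?_ ?_)
    · have := tendsto_finset_sum (Finset.univ)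
        (fun (z : (Fin k × Fin m) × (Fin k × Fin m)) (_ : z ∈ Finset.univ) =>
          hShat δ hδ z.1 z.2)
      simpa using this
    · have := tendsto_finset_sum (Finset.univ)
        (fun (x : Fin k × Fin m) (_ : x ∈ Finset.univ) => hQlim x (tlo x))
      simpa using this
    · have := tendsto_finset_sum (Finset.univ)
        (fun (x : Fin k × Fin m) (_ : x ∈ Finset.univ) => hQlim x (thi x))
      simpa using this
  -- eventual properties of ν
  have hev1 : ∀ᶠ ν in atTop, ∀ i : Fin k, 1 ≤ N ν i :=
    Filter.eventually_all.2 fun i => (hNlim i).eventually_ge_atTop 1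
  have hntend : Tendsto (fun ν => (n ν : ℝ)) atTop atTop := by
    apply tendsto_atTop_mono ?_ (tendsto_natCast_atTop_atTop.comp (hNlim i0))
    intro ν
    simp only [Function.comp_apply]
    have : N ν i0 ≤ n ν := by
      rw [hn ν]
      exact Finset.single_le_sum (fun i _ => Nat.zero_le _) (Finset.mem_univ i0)
    exact_mod_cast this
  have hev2 : ∀ᶠ ν in atTop, C / (c/2) < (n ν : ℝ) :=
    hntend.eventually_gt_atTop _
  -- eventual domination by the bound
  have hkey : ∀ᶠ ν in atTop,
      P {ω | (n ν : ℝ) *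
          (T.mulVec (fun x => sampleQuantile (N ν x.1) (fun j => X x.1 j ω) (p x.2)) ⬝ᵥ
            (G ν ω).mulVec
              (T.mulVec (fun x => sampleQuantile (N ν x.1) (fun j => X x.1 j ω) (p x.2))))
          ≤ C} ≤ bound ν := by
    filter_upwards [hev1, hev2] with ν hν1 hν2
    have hsub : {ω | (n ν : ℝ) *
          (T.mulVec (fun x => sampleQuantile (N ν x.1) (fun j => X x.1 j ω) (p x.2)) ⬝ᵥ
            (G ν ω).mulVec
              (T.mulVec (fun x => sampleQuantile (N ν x.1) (fun j => X x.1 j ω) (p x.2))))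
          ≤ C} ⊆
        (⋃ z : (Fin k × Fin m) × (Fin k × Fin m),
            {ω | δ ≤ |Shat ν ω z.1 z.2 - S z.1 z.2|})
        ∪ ((⋃ x : Fin k × Fin m, {ω | η x ≤
              |ecdf (N ν x.1) (fun j => X x.1 j ω) (tlo x) - F x.1 (tlo x)|})
          ∪ (⋃ x : Fin k × Fin m, {ω | η x ≤
              |ecdf (N ν x.1) (fun j => X x.1 j ω) (thi x) - F x.1 (thi x)|})) := by
      intro ω hω
      by_contra hnot
      simp only [Set.mem_union, Set.mem_iUnion, Set.mem_setOf_eq, not_or,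
        not_exists, not_le] at hnot
      obtain ⟨hnot1, hnot2, hnot3⟩ := hnot
      set qhat : Fin k × Fin m → ℝ :=
        fun x => sampleQuantile (N ν x.1) (fun j => X x.1 j ω) (p x.2) with hqhat
      have hSclose : ∀ a b, |Shat ν ω a b - S a b| < δ := fun a b => hnot1 (a, b)
      have hqclose : ∀ x, |qhat x - q x| < δ := by
        intro x
        have hbr := Stmt3Aux.sampleQuantile_bracket (N ν x.1) (hν1 x.1)
          (fun j => X x.1 j ω) (p x.2) (hp0 x.2) (hp1 x.2).le (F x.1)
          (tlo x) (thi x) (η x) (hη x) (hFhi x) (hFlo x)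
          (hnot2 x) (hnot3 x)
        have h1 := hlo x
        have h2 := hhi x
        exact abs_lt.2 ⟨by linarith [hbr.1], by linarith [hbr.2]⟩
      obtain ⟨hu1, hu2, hgt⟩ := hbox (Shat ν ω) qhat hSclose hqclose
      have hquad := Stmt3Aux.quad_eq T (Shat ν ω) (G ν ω) hTsymm hTidem
        hu1 hu2 (hG ν ω).1 qhat
      rw [Set.mem_setOf_eq, hquad] at hω
      have hn0 : (0 : ℝ) < (n ν : ℝ) := by
        have h1 : 0 < C / (c/2) := div_pos hC (by linarith)
        linarith
      have hCn : C < (n ν : ℝ) * (c/2) := by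
        rw [div_lt_iff₀ (by linarith : (0:ℝ) < c/2)] at hν2
        exact hν2
      have : (n ν : ℝ) * (c/2) < (n ν : ℝ) *
          (Stmt3Aux.numf T (Shat ν ω) qhat / (Stmt3Aux.Bmat T (Shat ν ω)).det) :=
        mul_lt_mul_of_pos_left hgt hn0
      linarith
    refine le_trans (measure_mono hsub) ?_
    refine le_trans (measure_union_le _ _) ?_
    rw [hbound]
    refine add_le_add ?_ (le_trans (measure_union_le _ _) (add_le_add ?_ ?_)) <;>
    · refine le_trans (measure_iUnion_le _) ?_
      rw [tsum_fintype]
  exact tendsto_of_tendsto_of_tendsto_of_le_of_le' tendsto_const_nhds hboundlim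
    (Filter.Eventually.of_forall fun ν => zero_le) hkey


end
end

section
/- Let Σ ∈ ℝ^{d×d} be a symmetric positive definite matrix, T ∈ ℝ^{d×d} any matrix, and q ∈ ℝ^d a vector with T q ≠ 0. If G is a Moore–Penrose inverse of T Σ Tᵀ, then the quadratic form (T q)ᵀ G (T q) is strictly positive. -/
open Matrix
open scoped MatrixOrder

private lemma dot_helper {d : ℕ} (A : Matrix (Fin d) (Fin d) ℝ) (x y : Fin d → ℝ) :
    A.mulVec x ⬝ᵥ y = x ⬝ᵥ Aᵀ.mulVec y := by
  rw [dotProduct_mulVec, vecMul_transpose]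

/-- if `Σ` is symmetric positive definite, `T q ≠ 0` and `G` is a Moore–Penrose
inverse of `T Σ Tᵀ`, then the quadratic form `(T q)ᵀ G (T q)` is strictly positive. -/
theorem statement4 {d : ℕ} (S T : Matrix (Fin d) (Fin d) ℝ) (q : Fin d → ℝ)
    (hS : S.PosDef) (hTq : T.mulVec q ≠ 0)
    (G : Matrix (Fin d) (Fin d) ℝ) (hG : IsMoorePenrose (T * S * Tᵀ) G) :
    0 < T.mulVec q ⬝ᵥ G.mulVec (T.mulVec q) := by
  set R := CFC.sqrt S with hRdef
  have hRsym : Rᵀ = R := (CFC.sqrt_nonneg S).posSemidef.isHermitian.eq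
  have hRR : R * R = S := CFC.sqrt_mul_sqrt_self S hS.posSemidef.nonneg
  set M := T * R with hMdef
  have hA : T * S * Tᵀ = M * Mᵀ := by
    rw [hMdef, transpose_mul, hRsym, ← hRR]
    noncomm_ring
  -- R has unit determinant
  have hdetR : IsUnit R.det := by
    have : R.det * R.det = S.det := by rw [← det_mul, hRR]
    have hSdet := hS.det_pos
    refine isUnit_iff_ne_zero.mpr fun h => ?_
    rw [h, mul_zero] at this
    exact hSdet.ne' this.symm
  -- ranges coincide
  have hle : LinearMap.range (T * S * Tᵀ).mulVecLin ≤ LinearMap.range T.mulVecLin := by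
    have : T * S * Tᵀ = T * (S * Tᵀ) := Matrix.mul_assoc _ _ _
    rw [this, mulVecLin_mul]
    exact LinearMap.range_comp_le_range _ _
  have hrank : (T * S * Tᵀ).rank = T.rank := by
    rw [hA, rank_self_mul_transpose, hMdef, rank_mul_eq_left_of_isUnit_det R T hdetR]
  have hrange : LinearMap.range (T * S * Tᵀ).mulVecLin = LinearMap.range T.mulVecLin :=
    Submodule.eq_of_le_of_finrank_eq hle hrank
  have hmem : T.mulVec q ∈ LinearMap.range (T * S * Tᵀ).mulVecLin := by
    rw [hrange]; exact ⟨q, rfl⟩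
  obtain ⟨x, hx⟩ := hmem
  rw [mulVecLin_apply] at hx
  have hAGA := hG.1
  have hSsym : Sᵀ = S := hS.isHermitian.eq
  have hAT : (T * S * Tᵀ)ᵀ = T * S * Tᵀ := by
    rw [transpose_mul, transpose_mul, transpose_transpose, hSsym, ← Matrix.mul_assoc]
  have key : T.mulVec q ⬝ᵥ G.mulVec (T.mulVec q) = Mᵀ.mulVec x ⬝ᵥ Mᵀ.mulVec x := by
    calc T.mulVec q ⬝ᵥ G.mulVec (T.mulVec q)
        = x ⬝ᵥ ((T * S * Tᵀ)ᵀ * (G * (T * S * Tᵀ))).mulVec x := by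
          rw [← hx, dot_helper, mulVec_mulVec, mulVec_mulVec, Matrix.mul_assoc]
      _ = x ⬝ᵥ (M * Mᵀ).mulVec x := by rw [hAT, ← Matrix.mul_assoc, hAGA, hA]
      _ = Mᵀ.mulVec x ⬝ᵥ Mᵀ.mulVec x := by
          rw [← mulVec_mulVec, dotProduct_comm, dot_helper, dotProduct_comm]
  rw [key]
  have hne : Mᵀ.mulVec x ≠ 0 := by
    intro h
    apply hTq
    rw [← hx, hA, ← mulVec_mulVec, h, mulVec_zero]
  have h0 : Mᵀ.mulVec x ⬝ᵥ Mᵀ.mulVec x ≠ 0 := fun h => hne (dotProduct_self_eq_zero.mp h)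
  have hnn : 0 ≤ Mᵀ.mulVec x ⬝ᵥ Mᵀ.mulVec x :=
    Finset.sum_nonneg fun i _ => mul_self_nonneg _
  exact lt_of_le_of_ne hnn (Ne.symm h0)
end

section
/- Let G : ℝ → ℝ be differentiable at a point u with derivative g(u). Let (δ_{n,1}) and (δ_{n,2}) be real sequences converging to 0 with δ_{n,1} ≠ δ_{n,2} for all n, and suppose that either limsup_n (δ_{n,1}/δ_{n,2}) < 1 or liminf_n (δ_{n,1}/δ_{n,2}) > 1, where for δ_{n,2} = 0 the ratio δ_{n,1}/δ_{n,2} is interpreted as +∞ if δ_{n,1} > 0 and as −∞ if δ_{n,1} < 0. Then (G(u + δ_{n,2}) − G(u + δ_{n,1}))/(δ_{n,2} − δ_{n,1}) → g(u) as n → ∞. -/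
open Filter Topology

/-- two-sided difference-quotient convergence. If `G` is differentiable at `u`,
`δ_{n,1}, δ_{n,2} → 0`, `δ_{n,1} ≠ δ_{n,2}`, and the ratio `δ_{n,1}/δ_{n,2}` (with the
convention `±∞` when `δ_{n,2} = 0`, according to the sign of `δ_{n,1}`) satisfies
`limsup < 1` or `liminf > 1`, then the difference quotient converges to `g(u)`. -/
theorem statement11
    (G : ℝ → ℝ) (u gu : ℝ) (hG : HasDerivAt G gu u)
    (δ₁ δ₂ : ℕ → ℝ)
    (h1 : Tendsto δ₁ atTop (𝓝 0)) (h2 : Tendsto δ₂ atTop (𝓝 0))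
    (hne : ∀ n, δ₁ n ≠ δ₂ n)
    (hcond :
      limsup (fun n => if δ₂ n = 0 then (if 0 < δ₁ n then (⊤ : EReal) else ⊥)
        else ((δ₁ n / δ₂ n : ℝ) : EReal)) atTop < (1 : EReal) ∨
      (1 : EReal) < liminf (fun n => if δ₂ n = 0 then (if 0 < δ₁ n then (⊤ : EReal) else ⊥)
        else ((δ₁ n / δ₂ n : ℝ) : EReal)) atTop) :
    Tendsto (fun n => (G (u + δ₂ n) - G (u + δ₁ n)) / (δ₂ n - δ₁ n)) atTop (𝓝 gu) := by
  -- Step 1: a uniform gap `c * |δ₂ n| ≤ |δ₂ n - δ₁ n|` eventually.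
  obtain ⟨c, hc, hev⟩ :
      ∃ c : ℝ, 0 < c ∧ ∀ᶠ n in atTop, c * |δ₂ n| ≤ |δ₂ n - δ₁ n| := by
    rcases hcond with h | h
    · obtain ⟨a, ha1, ha2⟩ := EReal.exists_between_coe_real h
      have ha2' : a < 1 := by exact_mod_cast ha2
      refine ⟨1 - a, by linarith, ?_⟩
      filter_upwards [eventually_lt_of_limsup_lt ha1] with n hn
      by_cases h0 : δ₂ n = 0
      · simp only [h0, abs_zero, mul_zero]
        exact abs_nonneg _
      · rw [if_neg h0] at hn
        have hr : δ₁ n / δ₂ n < a := by exact_mod_cast hn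
        have key : δ₂ n - δ₁ n = δ₂ n * (1 - δ₁ n / δ₂ n) := by field_simp
        rw [key, abs_mul]
        have h1r : 1 - a ≤ |1 - δ₁ n / δ₂ n| := le_trans (by linarith) (le_abs_self _)
        have := abs_nonneg (δ₂ n)
        nlinarith
    · obtain ⟨b, hb1, hb2⟩ := EReal.exists_between_coe_real h
      have hb1' : (1 : ℝ) < b := by exact_mod_cast hb1
      refine ⟨b - 1, by linarith, ?_⟩
      filter_upwards [eventually_lt_of_lt_liminf hb2] with n hn
      by_cases h0 : δ₂ n = 0
      · simp only [h0, abs_zero, mul_zero]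
        exact abs_nonneg _
      · rw [if_neg h0] at hn
        have hr : b < δ₁ n / δ₂ n := by exact_mod_cast hn
        have key : δ₂ n - δ₁ n = δ₂ n * (1 - δ₁ n / δ₂ n) := by field_simp
        rw [key, abs_mul]
        have h1r : b - 1 ≤ |1 - δ₁ n / δ₂ n| := by
          rw [abs_sub_comm]
          exact le_trans (by linarith) (le_abs_self _)
        have := abs_nonneg (δ₂ n)
        nlinarith
  -- Step 2: the little-o error function.
  set φ : ℝ → ℝ := fun h => G (u + h) - G u - gu * h with hφ
  set ψ : ℝ → ℝ := fun h => |φ h| / |h| with hψ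
  have hψ0 : ∀ h, 0 ≤ ψ h := fun h => by positivity
  have hψmul : ∀ h, |φ h| = ψ h * |h| := by
    intro h
    by_cases h0 : h = 0
    · simp [hψ, hφ, h0]
    · have : |h| ≠ 0 := abs_ne_zero.mpr h0
      simp only [hψ]
      rw [div_mul_cancel₀ _ this]
  have hψt : Tendsto ψ (𝓝 0) (𝓝 0) := by
    have hsup : Tendsto ψ (𝓝[≠] (0:ℝ) ⊔ pure 0) (𝓝 0) := by
      rw [tendsto_sup]
      constructor
      · have hs : Tendsto (fun t : ℝ => t⁻¹ • (G (u + t) - G u)) (𝓝[≠] 0) (𝓝 gu) :=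
          hG.tendsto_slope_zero
        have hs' : Tendsto (fun t : ℝ => |t⁻¹ • (G (u + t) - G u) - gu|) (𝓝[≠] 0) (𝓝 0) := by
          have := (hs.sub_const gu).abs
          simpa using this
        refine hs'.congr' ?_
        filter_upwards [self_mem_nhdsWithin] with t ht
        have ht' : t ≠ 0 := ht
        have hta : |t| ≠ 0 := abs_ne_zero.mpr ht'
        rw [hψ]
        simp only [smul_eq_mul]
        rw [← abs_div]
        congr 1
        field_simp
        ring
      · have h0 : ψ 0 = 0 := by simp [hψ, hφ]
        have := tendsto_pure_nhds ψ (0 : ℝ)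
        rwa [h0] at this
    rwa [nhdsNE_sup_pure] at hsup
  have hψ1 : Tendsto (fun n => ψ (δ₁ n)) atTop (𝓝 0) := hψt.comp h1
  have hψ2 : Tendsto (fun n => ψ (δ₂ n)) atTop (𝓝 0) := hψt.comp h2
  -- Step 3: squeeze.
  rw [← tendsto_sub_nhds_zero_iff]
  apply squeeze_zero_norm' (a := fun n => (1 / c) * ψ (δ₂ n) + (1 + 1 / c) * ψ (δ₁ n))
  · filter_upwards [hev] with n hn
    have hD : δ₂ n - δ₁ n ≠ 0 := sub_ne_zero.mpr (Ne.symm (hne n))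
    have hDpos : 0 < |δ₂ n - δ₁ n| := abs_pos.mpr hD
    have key : (G (u + δ₂ n) - G (u + δ₁ n)) / (δ₂ n - δ₁ n) - gu
        = (φ (δ₂ n) - φ (δ₁ n)) / (δ₂ n - δ₁ n) := by
      rw [hφ]
      field_simp
      ring
    rw [Real.norm_eq_abs, key, abs_div]
    rw [div_le_iff₀ hDpos]
    have habs : |φ (δ₂ n) - φ (δ₁ n)| ≤ ψ (δ₂ n) * |δ₂ n| + ψ (δ₁ n) * |δ₁ n| := by
      calc |φ (δ₂ n) - φ (δ₁ n)| ≤ |φ (δ₂ n)| + |φ (δ₁ n)| := abs_sub _ _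
        _ = ψ (δ₂ n) * |δ₂ n| + ψ (δ₁ n) * |δ₁ n| := by rw [hψmul, hψmul]
    have hB : |δ₁ n| ≤ |δ₂ n - δ₁ n| + |δ₂ n| := by
      have := abs_sub_abs_le_abs_sub (δ₁ n) (δ₂ n)
      rw [abs_sub_comm] at this
      linarith
    have hcc : c * (1 / c) = 1 := by field_simp
    have hp2 := hψ0 (δ₂ n)
    have hp1 := hψ0 (δ₁ n)
    have hA := abs_nonneg (δ₂ n)
    have hkey1 : ψ (δ₂ n) * |δ₂ n| ≤ (1 / c) * ψ (δ₂ n) * |δ₂ n - δ₁ n| := by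
      have h := mul_le_mul_of_nonneg_left hn (mul_nonneg (by positivity : (0:ℝ) ≤ 1 / c) hp2)
      calc ψ (δ₂ n) * |δ₂ n| = (1 / c) * ψ (δ₂ n) * (c * |δ₂ n|) := by
            field_simp
        _ ≤ (1 / c) * ψ (δ₂ n) * |δ₂ n - δ₁ n| := h
    have hkey2 : ψ (δ₁ n) * |δ₁ n| ≤ (1 + 1 / c) * ψ (δ₁ n) * |δ₂ n - δ₁ n| := by
      have hA' : |δ₂ n| ≤ (1 / c) * |δ₂ n - δ₁ n| := by
        have h := mul_le_mul_of_nonneg_left hn (le_of_lt (by positivity : (0:ℝ) < 1 / c))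
        nlinarith
      calc ψ (δ₁ n) * |δ₁ n| ≤ ψ (δ₁ n) * (|δ₂ n - δ₁ n| + |δ₂ n|) :=
            mul_le_mul_of_nonneg_left hB hp1
        _ ≤ ψ (δ₁ n) * (|δ₂ n - δ₁ n| + (1 / c) * |δ₂ n - δ₁ n|) := by
            apply mul_le_mul_of_nonneg_left _ hp1
            linarith
        _ = (1 + 1 / c) * ψ (δ₁ n) * |δ₂ n - δ₁ n| := by ring
    calc |φ (δ₂ n) - φ (δ₁ n)| ≤ ψ (δ₂ n) * |δ₂ n| + ψ (δ₁ n) * |δ₁ n| := habs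
      _ ≤ (1 / c) * ψ (δ₂ n) * |δ₂ n - δ₁ n| + (1 + 1 / c) * ψ (δ₁ n) * |δ₂ n - δ₁ n| := by
          linarith
      _ = ((1 / c) * ψ (δ₂ n) + (1 + 1 / c) * ψ (δ₁ n)) * |δ₂ n - δ₁ n| := by ring
  · have := (hψ2.const_mul (1 / c)).add (hψ1.const_mul (1 + 1 / c))
    simpa using this
end
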